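/- Let R be a commutative ring, M an R-module, and s ∈ M. Assume that the quotient module M/(R·s) has finite length and that M has no nonzero submodule of finite length. Then the annihilator of s in R equals the annihilator of M in R, i.e., Ann_R(s) = Ann_R(M). -/

import Mathlib

/-- **Module-theoretic form of Lemma 1.2** of Pandharipande–Thomas, "Curve counting via stable
pairs in the derived category".  Let `R` be a commutative ring, `M` an `R`-module, and `s ∈ M`.
Assume that the quotient module `M/(R·s)` has finite length and that `M` has no nonzero submodule
of finite length.  Then the annihilator of `s` in `R` equals the annihilator of `M` in `R`. -/
theorem annihilator_eq_of_finiteLength_cokernel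
    (R : Type) [CommRing R] (M : Type) [AddCommGroup M] [Module R M] (s : M)
    (hcoker : IsFiniteLength R (M ⧸ (R ∙ s)))
    (hpure : ∀ N : Submodule R M, IsFiniteLength R N → N = ⊥) :
    (R ∙ s).annihilator = Module.annihilator R M := by
  apply le_antisymm
  · intro a ha
    rw [Submodule.mem_annihilator] at ha
    -- map M ⧸ (R∙s) → M, x ↦ a • x
    have hker : (R ∙ s) ≤ LinearMap.ker (a • (LinearMap.id : M →ₗ[R] M)) := by
      rw [Submodule.span_singleton_le_iff_mem]
      simp [ha s (Submodule.mem_span_singleton_self s)]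
    set f := Submodule.liftQ (R ∙ s) (a • LinearMap.id) hker with hf
    have hrange : IsFiniteLength R (LinearMap.range f) := by
      rw [isFiniteLength_iff_isNoetherian_isArtinian] at hcoker ⊢
      obtain ⟨h1, h2⟩ := hcoker
      exact ⟨isNoetherian_of_surjective f.rangeRestrict
          (LinearMap.range_rangeRestrict f),
        isArtinian_of_surjective _ f.rangeRestrict f.surjective_rangeRestrict⟩
    have := hpure _ hrange
    rw [Module.mem_annihilator]
    intro m
    have hm : f (Submodule.Quotient.mk m) = a • m := by simp [hf]
    have : f (Submodule.Quotient.mk m) = 0 := by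
      have h := LinearMap.mem_range_self f (Submodule.Quotient.mk m)
      rw [this] at h
      simpa using h
    rw [hm] at this
    simpa using this
  · intro a ha
    rw [Module.mem_annihilator] at ha
    rw [Submodule.mem_annihilator]
    intro m _
    exact ha m
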